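/- Let P ∈ Q be a quantum behaviour in the (2,2,2,2) Bell scenario with ⟨A₀B₀⟩ = ⟨A₀B₁⟩ = 1. Then ⟨A₁B₀⟩ = ⟨A₁B₁⟩ and P is local, i.e. P ∈ L. Consequently, for the Bell function B₅·P := ⟨A₀B₀⟩ + ⟨A₀B₁⟩ one has β_L(B₅) = β_Q(B₅) = β_NS(B₅) = 2 and F_L(B₅) = F_Q(B₅) ⊊ F_NS(B₅), the strict inclusion being witnessed by the PR box (the no-signalling behaviour with zero marginals and ⟨A_xB_y⟩ = (−1)^{xy}), which saturates the bound but does not belong to Q. -/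

import Mathlib

open Matrix Kronecker ComplexOrder BigOperators

/-- A behaviour in the (2,2,2,2) Bell scenario: `P a b x y = P(ab|xy)`. -/
abbrev Behaviour : Type := Fin 2 → Fin 2 → Fin 2 → Fin 2 → ℝ

/-- `P` admits a quantum realisation of local dimension `d`. -/
def HasRealisation (d : ℕ) (P : Behaviour) : Prop :=
  ∃ (ρ : Matrix (Fin d × Fin d) (Fin d × Fin d) ℂ)
    (E F : Fin 2 → Fin 2 → Matrix (Fin d) (Fin d) ℂ),
    ρ.PosSemidef ∧ ρ.trace = 1 ∧
    (∀ x a, (E x a).PosSemidef) ∧ (∀ y b, (F y b).PosSemidef) ∧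
    (∀ x, ∑ a, E x a = 1) ∧ (∀ y, ∑ b, F y b = 1) ∧
    ∀ a b x y, (P a b x y : ℂ) = ((E x a ⊗ₖ F y b) * ρ).trace

def Qfinite : Set Behaviour := {P | ∃ d : ℕ, 0 < d ∧ HasRealisation d P}

def Q : Set Behaviour := closure Qfinite

def detBehaviour (f g : Fin 2 → Fin 2) : Behaviour :=
  fun a b x y => if a = f x ∧ b = g y then 1 else 0

def L : Set Behaviour := convexHull ℝ {P | ∃ f g, P = detBehaviour f g}

def NS : Set Behaviour :=
  {P | (∀ a b x y, 0 ≤ P a b x y) ∧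
       (∀ x y : Fin 2, ∑ a : Fin 2, ∑ b : Fin 2, P a b x y = 1) ∧
       (∀ (a x y y' : Fin 2), ∑ b : Fin 2, P a b x y = ∑ b : Fin 2, P a b x y') ∧
       (∀ (b x x' y : Fin 2), ∑ a : Fin 2, P a b x y = ∑ a : Fin 2, P a b x' y)}

def margA (P : Behaviour) (x : Fin 2) : ℝ :=
  ∑ a : Fin 2, ∑ b : Fin 2, (-1 : ℝ) ^ (a : ℕ) * P a b x 0

def margB (P : Behaviour) (y : Fin 2) : ℝ :=
  ∑ a : Fin 2, ∑ b : Fin 2, (-1 : ℝ) ^ (b : ℕ) * P a b 0 y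

def corr (P : Behaviour) (x y : Fin 2) : ℝ :=
  ∑ a : Fin 2, ∑ b : Fin 2, (-1 : ℝ) ^ ((a : ℕ) + (b : ℕ)) * P a b x y

def chsh (P : Behaviour) : ℝ := corr P 0 0 + corr P 0 1 + corr P 1 0 - corr P 1 1

def bell (B P : Behaviour) : ℝ := ∑ a : Fin 2, ∑ b : Fin 2, ∑ x : Fin 2, ∑ y : Fin 2, B a b x y * P a b x y

noncomputable def beta (B : Behaviour) (S : Set Behaviour) : ℝ := sSup (bell B '' S)

def face (B : Behaviour) (S : Set Behaviour) : Set Behaviour :=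
  {P ∈ S | bell B P = beta B S}

/-- Reconstruct a behaviour from marginals and correlators. -/
noncomputable def fromCorr (mA mB : Fin 2 → ℝ) (c : Fin 2 → Fin 2 → ℝ) : Behaviour :=
  fun a b x y =>
    (1 + (-1 : ℝ) ^ (a : ℕ) * mA x + (-1 : ℝ) ^ (b : ℕ) * mB y
      + (-1 : ℝ) ^ ((a : ℕ) + (b : ℕ)) * c x y) / 4


/-- The Bell functional `B₅`. -/
def B5val (P : Behaviour) : ℝ := corr P 0 0 + corr P 0 1

/-- The PR box: zero marginals and correlators `(−1)^{xy}`. -/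
noncomputable def PR : Behaviour :=
  fromCorr (fun _ => 0) (fun _ => 0) (fun x y => (-1 : ℝ) ^ ((x : ℕ) * (y : ℕ)))

set_option linter.unusedSectionVars false
set_option maxHeartbeats 1000000

variable {n m : Type*} [Fintype n] [DecidableEq n] [Fintype m] [DecidableEq m]

def toE (M : Matrix n n ℂ) : EuclideanSpace ℂ (n × n) := WithLp.toLp 2 (fun p => M p.2 p.1)

lemma toE_sub (A B : Matrix n n ℂ) : toE (A - B) = toE A - toE B := by
  ext p; simp [toE]

lemma toE_add (A B : Matrix n n ℂ) : toE (A + B) = toE A + toE B := by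
  ext p; simp [toE]

lemma toE_smul (c : ℂ) (A : Matrix n n ℂ) : toE (c • A) = c • toE A := by
  ext p; simp [toE]

lemma inner_toE (A B : Matrix n n ℂ) : (inner ℂ (toE A) (toE B) : ℂ) = (Aᴴ * B).trace := by
  simp only [PiLp.inner_apply, RCLike.inner_apply, toE, Matrix.trace, Matrix.diag,
    Matrix.mul_apply, Matrix.conjTranspose_apply, PiLp.toLp_apply]
  rw [← Finset.univ_product_univ, Finset.sum_product]
  exact Finset.sum_congr rfl fun i _ => Finset.sum_congr rfl fun j _ => mul_comm _ _

lemma kron_conjT (A : Matrix n n ℂ) (B : Matrix m m ℂ) : (A ⊗ₖ B)ᴴ = Aᴴ ⊗ₖ Bᴴ := by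
  ext p q
  simp [Matrix.conjTranspose_apply, Matrix.kroneckerMap_apply, mul_comm]

lemma kron_sub_left (A B : Matrix n n ℂ) (C : Matrix m m ℂ) :
    (A - B) ⊗ₖ C = A ⊗ₖ C - B ⊗ₖ C := by
  ext p q; simp [Matrix.kroneckerMap_apply, sub_mul]

lemma kron_sub_right (C : Matrix n n ℂ) (A B : Matrix m m ℂ) :
    C ⊗ₖ (A - B) = C ⊗ₖ A - C ⊗ₖ B := by
  ext p q; simp [Matrix.kroneckerMap_apply, mul_sub]

lemma kron_add_left (A B : Matrix n n ℂ) (C : Matrix m m ℂ) :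
    (A + B) ⊗ₖ C = A ⊗ₖ C + B ⊗ₖ C := by
  ext p q; simp [Matrix.kroneckerMap_apply, add_mul]

lemma kron_add_right (C : Matrix n n ℂ) (A B : Matrix m m ℂ) :
    C ⊗ₖ (A + B) = C ⊗ₖ A + C ⊗ₖ B := by
  ext p q; simp [Matrix.kroneckerMap_apply, mul_add]

lemma kron_smul_left (c : ℂ) (A : Matrix n n ℂ) (C : Matrix m m ℂ) :
    (c • A) ⊗ₖ C = c • (A ⊗ₖ C) := by
  ext p q; simp [Matrix.kroneckerMap_apply, mul_assoc]

lemma kron_smul_right (c : ℂ) (C : Matrix n n ℂ) (A : Matrix m m ℂ) :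
    C ⊗ₖ (c • A) = c • (C ⊗ₖ A) := by
  ext p q; simp [Matrix.kroneckerMap_apply]; ring

lemma ring_id1 {R : Type*} [Ring R] (w v : R) :
    (w*v + w*v)*(v*w + v*w) = w*(v*v)*w + w*(v*v)*w + w*(v*v)*w + w*(v*v)*w := by
  noncomm_ring

lemma ring_id2 {R : Type*} [Ring R] (w : R) :
    w*(1-w*w)*w + w*(1-w*w)*w + w*(1-w*w)*w + w*(1-w*w)*w
      = 1 - (w*w - (1 - w*w)) * (w*w - (1 - w*w)) := by
  noncomm_ring

noncomputable def Matrix.PosSemidef.sqrt {k : Type*} [Fintype k] [DecidableEq k]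
    {A : Matrix k k ℂ} (hA : A.PosSemidef) : Matrix k k ℂ :=
  (hA.1.eigenvectorUnitary : Matrix k k ℂ)
    * Matrix.diagonal (fun i => ((Real.sqrt (hA.1.eigenvalues i) : ℝ) : ℂ))
    * star (hA.1.eigenvectorUnitary : Matrix k k ℂ)

lemma Matrix.PosSemidef.posSemidef_sqrt {k : Type*} [Fintype k] [DecidableEq k]
    {A : Matrix k k ℂ} (hA : A.PosSemidef) : hA.sqrt.PosSemidef := by
  unfold Matrix.PosSemidef.sqrt
  rw [Matrix.star_eq_conjTranspose]
  refine Matrix.PosSemidef.mul_mul_conjTranspose_same (Matrix.PosSemidef.diagonal ?_) _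
  intro i
  exact Complex.zero_le_real.2 (Real.sqrt_nonneg _)

lemma Matrix.PosSemidef.sqrt_mul_self {k : Type*} [Fintype k] [DecidableEq k]
    {A : Matrix k k ℂ} (hA : A.PosSemidef) : hA.sqrt * hA.sqrt = A := by
  conv_rhs => rw [hA.1.spectral_theorem, Unitary.conjStarAlgAut_apply]
  have hu : star (hA.1.eigenvectorUnitary : Matrix k k ℂ) * (hA.1.eigenvectorUnitary : Matrix k k ℂ)
      = 1 := Unitary.coe_star_mul_self _
  unfold Matrix.PosSemidef.sqrt
  simp only [Matrix.mul_assoc]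
  rw [← Matrix.mul_assoc (star _) _ (Matrix.diagonal _ * _), hu, Matrix.one_mul,
    ← Matrix.mul_assoc (Matrix.diagonal _), Matrix.diagonal_mul_diagonal]
  congr 3
  funext i
  simp only [Function.comp_apply]
  rw [← Complex.ofReal_mul, Real.mul_self_sqrt (hA.eigenvalues_nonneg i)]
  rfl

section W
variable {d : ℕ} (ρ : Matrix (Fin d × Fin d) (Fin d × Fin d) ℂ) (hρ : ρ.PosSemidef)

noncomputable def wv (M N : Matrix (Fin d) (Fin d) ℂ) :
    EuclideanSpace ℂ ((Fin d × Fin d) × (Fin d × Fin d)) :=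
  toE ((M ⊗ₖ N) * hρ.sqrt)

lemma wv_inner (M N M' N' : Matrix (Fin d) (Fin d) ℂ) :
    (inner ℂ (wv ρ hρ M N) (wv ρ hρ M' N') : ℂ)
      = (((Mᴴ * M') ⊗ₖ (Nᴴ * N')) * ρ).trace := by
  rw [wv, wv, inner_toE, Matrix.conjTranspose_mul, kron_conjT,
    hρ.posSemidef_sqrt.isHermitian.eq]
  rw [Matrix.mul_assoc, Matrix.trace_mul_comm, Matrix.mul_assoc,
    Matrix.mul_assoc _ hρ.sqrt hρ.sqrt, hρ.sqrt_mul_self,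
    ← Matrix.mul_assoc, ← Matrix.mul_kronecker_mul]

lemma wv_sub_left (M M' N : Matrix (Fin d) (Fin d) ℂ) :
    wv ρ hρ (M - M') N = wv ρ hρ M N - wv ρ hρ M' N := by
  rw [wv, wv, wv, kron_sub_left, Matrix.sub_mul, toE_sub]

lemma wv_sub_right (M N N' : Matrix (Fin d) (Fin d) ℂ) :
    wv ρ hρ M (N - N') = wv ρ hρ M N - wv ρ hρ M N' := by
  rw [wv, wv, wv, kron_sub_right, Matrix.sub_mul, toE_sub]

lemma wv_add_left (M M' N : Matrix (Fin d) (Fin d) ℂ) :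
    wv ρ hρ (M + M') N = wv ρ hρ M N + wv ρ hρ M' N := by
  rw [wv, wv, wv, kron_add_left, Matrix.add_mul, toE_add]

lemma wv_add_right (M N N' : Matrix (Fin d) (Fin d) ℂ) :
    wv ρ hρ M (N + N') = wv ρ hρ M N + wv ρ hρ M N' := by
  rw [wv, wv, wv, kron_add_right, Matrix.add_mul, toE_add]

lemma wv_smul_left (c : ℂ) (M N : Matrix (Fin d) (Fin d) ℂ) :
    wv ρ hρ (c • M) N = c • wv ρ hρ M N := by
  rw [wv, wv, kron_smul_left, Matrix.smul_mul, toE_smul]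

lemma wv_smul_right (c : ℂ) (M N : Matrix (Fin d) (Fin d) ℂ) :
    wv ρ hρ M (c • N) = c • wv ρ hρ M N := by
  rw [wv, wv, kron_smul_right, Matrix.smul_mul, toE_smul]

lemma wv_normsq (M N : Matrix (Fin d) (Fin d) ℂ) :
    (‖wv ρ hρ M N‖^2 : ℝ) = (((Mᴴ * M) ⊗ₖ (Nᴴ * N)) * ρ).trace.re := by
  rw [← wv_inner, ← inner_self_eq_norm_sq (𝕜 := ℂ)]
  rfl

lemma wv_norm_le (htr : ρ.trace = 1) (M N C D : Matrix (Fin d) (Fin d) ℂ)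
    (hC : Cᴴ*C = 1 - Mᴴ*M) (hD : Dᴴ*D = 1 - Nᴴ*N) : ‖wv ρ hρ M N‖ ≤ 1 := by
  have hdec : (Mᴴ*M) ⊗ₖ (Nᴴ*N) + ((Cᴴ*C) ⊗ₖ (Nᴴ*N) + (1:Matrix (Fin d) (Fin d) ℂ) ⊗ₖ (Dᴴ*D))
      = (1 : Matrix (Fin d) (Fin d) ℂ) ⊗ₖ (1 : Matrix (Fin d) (Fin d) ℂ) := by
    rw [hC, hD, kron_sub_left, kron_sub_right]
    abel
  have hsum : ‖wv ρ hρ M N‖^2 + (‖wv ρ hρ C N‖^2 + ‖wv ρ hρ 1 D‖^2) = 1 := by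
    rw [wv_normsq, wv_normsq, wv_normsq, Matrix.conjTranspose_one, Matrix.one_mul]
    rw [← Complex.add_re, ← Complex.add_re, ← Matrix.trace_add, ← Matrix.trace_add,
      ← Matrix.add_mul, ← Matrix.add_mul, hdec, Matrix.one_kronecker_one, Matrix.one_mul, htr]
    rfl
  nlinarith [norm_nonneg (wv ρ hρ M N), sq_nonneg (‖wv ρ hρ C N‖), sq_nonneg (‖wv ρ hρ 1 D‖),
    norm_nonneg (wv ρ hρ C N), norm_nonneg (wv ρ hρ 1 D)]

end W

lemma corr_expand (P : Behaviour) (x y : Fin 2) :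
    corr P x y = P 0 0 x y - P 0 1 x y - P 1 0 x y + P 1 1 x y := by
  rw [corr, Fin.sum_univ_two, Fin.sum_univ_two, Fin.sum_univ_two]
  norm_num
  ring

lemma exists_C {k : ℕ} (G H : Matrix (Fin k) (Fin k) ℂ) (hG : G.PosSemidef) (hH : H.PosSemidef)
    (hsum : G + H = 1) : ∃ C : Matrix (Fin k) (Fin k) ℂ, Cᴴ * C = 1 - (G - H)ᴴ * (G - H) := by
  have h10 : (1 : Matrix (Fin k) (Fin k) ℂ) - G = H := by rw [← hsum]; abel
  obtain ⟨w, hwH, hww⟩ : ∃ w : Matrix (Fin k) (Fin k) ℂ, wᴴ = w ∧ w * w = G :=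
    ⟨hG.sqrt, hG.posSemidef_sqrt.1.eq, hG.sqrt_mul_self⟩
  obtain ⟨v, hvH, hvv⟩ : ∃ v : Matrix (Fin k) (Fin k) ℂ, vᴴ = v ∧ v * v = H :=
    ⟨hH.sqrt, hH.posSemidef_sqrt.1.eq, hH.sqrt_mul_self⟩
  refine ⟨v * w + v * w, ?_⟩
  rw [Matrix.conjTranspose_add, Matrix.conjTranspose_mul, hwH, hvH, ring_id1, hvv,
    Matrix.conjTranspose_sub, hG.1.eq, hH.1.eq, ← h10, ← hww]
  exact ring_id2 w

lemma realisation_facts {d : ℕ} {P : Behaviour} (h : HasRealisation d P) :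
    P ∈ NS ∧ ∀ a b x y y' : Fin 2,
      |P a b x y - P a b x y'| ≤
        (Real.sqrt (2*(1 - corr P 0 y)) + Real.sqrt (2*(1 - corr P 0 y')))/2 := by
  obtain ⟨ρ, E, F, hρ, htr, hE, hF, hEsum, hFsum, hP⟩ := h
  have hE2 : ∀ x, E x 0 + E x 1 = 1 := by
    intro x; have := hEsum x; rwa [Fin.sum_univ_two] at this
  have hF2 : ∀ y, F y 0 + F y 1 = 1 := by
    intro y; have := hFsum y; rwa [Fin.sum_univ_two] at this
  have hPinner : ∀ a b x y, ((P a b x y : ℝ) : ℂ)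
      = inner ℂ (wv ρ hρ (E x a) 1) (wv ρ hρ 1 (F y b)) := by
    intro a b x y
    rw [wv_inner, Matrix.mul_one, Matrix.conjTranspose_one, Matrix.one_mul, (hE x a).1.eq]
    exact hP a b x y
  have hPos : ∀ a b x y, 0 ≤ P a b x y := by
    intro a b x y
    have h1 : ((P a b x y : ℝ) : ℂ)
        = inner ℂ (wv ρ hρ (hE x a).sqrt (hF y b).sqrt) (wv ρ hρ (hE x a).sqrt (hF y b).sqrt) := by
      rw [wv_inner, (hE x a).posSemidef_sqrt.1.eq, (hF y b).posSemidef_sqrt.1.eq,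
        (hE x a).sqrt_mul_self, (hF y b).sqrt_mul_self]
      exact hP a b x y
    have h2 := congrArg Complex.re h1
    rw [Complex.ofReal_re] at h2
    rw [h2]
    exact inner_self_nonneg (𝕜 := ℂ) (x := wv ρ hρ (hE x a).sqrt (hF y b).sqrt)
  have hBmarg : ∀ a x y, ((P a 0 x y + P a 1 x y : ℝ) : ℂ)
      = ((E x a ⊗ₖ (1:Matrix (Fin d) (Fin d) ℂ)) * ρ).trace := by
    intro a x y
    rw [Complex.ofReal_add, hP, hP, ← Matrix.trace_add, ← Matrix.add_mul, ← kron_add_right, hF2]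
  have hAmarg : ∀ b x y, ((P 0 b x y + P 1 b x y : ℝ) : ℂ)
      = (((1:Matrix (Fin d) (Fin d) ℂ) ⊗ₖ F y b) * ρ).trace := by
    intro b x y
    rw [Complex.ofReal_add, hP, hP, ← Matrix.trace_add, ← Matrix.add_mul, ← kron_add_left, hE2]
  have hNorm : ∀ x y, (P 0 0 x y + P 0 1 x y) + (P 1 0 x y + P 1 1 x y) = 1 := by
    intro x y
    have hc : (((P 0 0 x y + P 0 1 x y) + (P 1 0 x y + P 1 1 x y) : ℝ) : ℂ) = 1 := by
      rw [Complex.ofReal_add, hBmarg, hBmarg, ← Matrix.trace_add, ← Matrix.add_mul,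
        ← kron_add_left, hE2, Matrix.one_kronecker_one, Matrix.one_mul, htr]
    exact_mod_cast hc
  have hNS : P ∈ NS := by
    refine ⟨hPos, ?_, ?_, ?_⟩
    · intro x y
      rw [Fin.sum_univ_two, Fin.sum_univ_two, Fin.sum_univ_two]
      exact hNorm x y
    · intro a x y y'
      rw [Fin.sum_univ_two, Fin.sum_univ_two]
      exact_mod_cast (hBmarg a x y).trans (hBmarg a x y').symm
    · intro b x x' y
      rw [Fin.sum_univ_two, Fin.sum_univ_two]
      exact_mod_cast (hAmarg b x y).trans (hAmarg b x' y).symm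
  refine ⟨hNS, ?_⟩
  -- correlator identity
  have hcorr : ∀ x y, ((corr P x y : ℝ) : ℂ)
      = inner ℂ (wv ρ hρ (E x 0 - E x 1) 1) (wv ρ hρ 1 (F y 0 - F y 1)) := by
    intro x y
    rw [wv_sub_left, wv_sub_right, inner_sub_left, inner_sub_right, inner_sub_right,
      ← hPinner, ← hPinner, ← hPinner, ← hPinner]
    rw [corr_expand]
    push_cast
    ring
  -- norm bounds
  have hz : (0:Matrix (Fin d) (Fin d) ℂ)ᴴ * 0
      = 1 - (1:Matrix (Fin d) (Fin d) ℂ)ᴴ * (1:Matrix (Fin d) (Fin d) ℂ) := by simp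
  have h1_norm : ‖wv ρ hρ (1:Matrix (Fin d) (Fin d) ℂ) 1‖ ≤ 1 :=
    wv_norm_le ρ hρ htr 1 1 0 0 hz hz
  have hA_norm : ∀ x, ‖wv ρ hρ (E x 0 - E x 1) 1‖ ≤ 1 := by
    intro x
    obtain ⟨C, hC⟩ := exists_C (E x 0) (E x 1) (hE x 0) (hE x 1) (hE2 x)
    exact wv_norm_le ρ hρ htr _ 1 C 0 hC (by simp)

  have hB_norm : ∀ y, ‖wv ρ hρ (1:Matrix (Fin d) (Fin d) ℂ) (F y 0 - F y 1)‖ ≤ 1 := by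
    intro y
    obtain ⟨D, hD⟩ := exists_C (F y 0) (F y 1) (hF y 0) (hF y 1) (hF2 y)
    exact wv_norm_le ρ hρ htr 1 _ 0 D (by simp) hD
  -- decompositions
  have hEv : ∀ x (a : Fin 2), wv ρ hρ (E x a) 1
      = (2⁻¹:ℂ) • (wv ρ hρ 1 1 + ((-1:ℂ))^(a:ℕ) • wv ρ hρ (E x 0 - E x 1) 1) := by
    intro x a
    have hm : E x a = (2⁻¹:ℂ) • ((1:Matrix (Fin d) (Fin d) ℂ)
        + ((-1:ℂ))^(a:ℕ) • (E x 0 - E x 1)) := by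
      obtain rfl | rfl : a = 0 ∨ a = 1 := by omega
      · rw [← hE2 x]
        simp only [Fin.val_zero, pow_zero, one_smul]
        module
      · rw [← hE2 x]
        simp only [Fin.val_one, pow_one, neg_smul, one_smul]
        module
    conv_lhs => rw [hm]
    rw [wv_smul_left, wv_add_left, wv_smul_left]
  have hFv : ∀ y (b : Fin 2), wv ρ hρ 1 (F y b)
      = (2⁻¹:ℂ) • (wv ρ hρ 1 1 + ((-1:ℂ))^(b:ℕ) • wv ρ hρ 1 (F y 0 - F y 1)) := by
    intro y b
    have hm : F y b = (2⁻¹:ℂ) • ((1:Matrix (Fin d) (Fin d) ℂ)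
        + ((-1:ℂ))^(b:ℕ) • (F y 0 - F y 1)) := by
      obtain rfl | rfl : b = 0 ∨ b = 1 := by omega
      · rw [← hF2 y]
        simp only [Fin.val_zero, pow_zero, one_smul]
        module
      · rw [← hF2 y]
        simp only [Fin.val_one, pow_one, neg_smul, one_smul]
        module
    conv_lhs => rw [hm]
    rw [wv_smul_right, wv_add_right, wv_smul_right]
  have hExa_norm : ∀ x a, ‖wv ρ hρ (E x a) 1‖ ≤ 1 := by
    intro x a
    rw [hEv x a, norm_smul]
    have h1 : ‖wv ρ hρ (1:Matrix (Fin d) (Fin d) ℂ) 1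
        + ((-1:ℂ))^(a:ℕ) • wv ρ hρ (E x 0 - E x 1) 1‖ ≤ 2 := by
      calc _ ≤ ‖wv ρ hρ (1:Matrix (Fin d) (Fin d) ℂ) 1‖
            + ‖((-1:ℂ))^(a:ℕ) • wv ρ hρ (E x 0 - E x 1) 1‖ := norm_add_le _ _
        _ ≤ 1 + 1 := by
            rw [norm_smul]
            simp only [norm_pow, norm_neg, norm_one, one_pow, one_mul]
            exact add_le_add h1_norm (hA_norm x)
        _ = 2 := by norm_num
    have h2 : ‖(2⁻¹:ℂ)‖ = 2⁻¹ := by norm_num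
    rw [h2]
    linarith
  have hdiffv : ∀ y (b : Fin 2), ‖wv ρ hρ 1 (F y b) - wv ρ hρ (E 0 b) 1‖
      ≤ 2⁻¹ * ‖wv ρ hρ (E 0 0 - E 0 1) 1 - wv ρ hρ 1 (F y 0 - F y 1)‖ := by
    intro y b
    rw [hFv y b, hEv 0 b]
    have hmod : (2⁻¹:ℂ) • (wv ρ hρ (1:Matrix (Fin d) (Fin d) ℂ) 1
          + ((-1:ℂ))^(b:ℕ) • wv ρ hρ 1 (F y 0 - F y 1))
        - (2⁻¹:ℂ) • (wv ρ hρ (1:Matrix (Fin d) (Fin d) ℂ) 1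
          + ((-1:ℂ))^(b:ℕ) • wv ρ hρ (E 0 0 - E 0 1) 1)
        = ((-1:ℂ))^(b:ℕ) • ((2⁻¹:ℂ) •
            (wv ρ hρ 1 (F y 0 - F y 1) - wv ρ hρ (E 0 0 - E 0 1) 1)) := by
      module
    rw [hmod, norm_smul, norm_smul, norm_sub_rev]
    simp only [norm_pow, norm_neg, norm_one, one_pow, one_mul]
    have h2 : ‖(2⁻¹:ℂ)‖ = 2⁻¹ := by norm_num
    rw [h2]
  -- epsilon bounds
  have hre : ∀ y, (inner ℂ (wv ρ hρ (E 0 0 - E 0 1) 1) (wv ρ hρ 1 (F y 0 - F y 1)) : ℂ).re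
      = corr P 0 y := by
    intro y; rw [← hcorr 0 y, Complex.ofReal_re]
  have hEps : ∀ y, ‖wv ρ hρ (E 0 0 - E 0 1) 1 - wv ρ hρ 1 (F y 0 - F y 1)‖
      ≤ Real.sqrt (2*(1 - corr P 0 y)) := by
    intro y
    have hns := norm_sub_sq (𝕜 := ℂ) (wv ρ hρ (E 0 0 - E 0 1) 1) (wv ρ hρ 1 (F y 0 - F y 1))
    rw [RCLike.re_to_complex, hre y] at hns
    have hsq : ‖wv ρ hρ (E 0 0 - E 0 1) 1 - wv ρ hρ 1 (F y 0 - F y 1)‖^2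
        ≤ 2*(1 - corr P 0 y) := by
      nlinarith [hA_norm 0, hB_norm y, norm_nonneg (wv ρ hρ (E 0 0 - E 0 1) 1),
        norm_nonneg (wv ρ hρ (1:Matrix (Fin d) (Fin d) ℂ) (F y 0 - F y 1))]
    calc ‖wv ρ hρ (E 0 0 - E 0 1) 1 - wv ρ hρ 1 (F y 0 - F y 1)‖
        = Real.sqrt (‖wv ρ hρ (E 0 0 - E 0 1) 1 - wv ρ hρ 1 (F y 0 - F y 1)‖^2) :=
          (Real.sqrt_sq (norm_nonneg _)).symm
      _ ≤ _ := Real.sqrt_le_sqrt hsq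
  -- final estimate
  intro a b x y y'
  have hinner : ((P a b x y - P a b x y' : ℝ) : ℂ)
      = inner ℂ (wv ρ hρ (E x a) 1) (wv ρ hρ 1 (F y b) - wv ρ hρ 1 (F y' b)) := by
    rw [inner_sub_right, Complex.ofReal_sub, hPinner a b x y, hPinner a b x y']
  have habs : |P a b x y - P a b x y'|
      = ‖(inner ℂ (wv ρ hρ (E x a) 1) (wv ρ hρ 1 (F y b) - wv ρ hρ 1 (F y' b)) : ℂ)‖ := by
    rw [← hinner, Complex.norm_real, Real.norm_eq_abs]
  rw [habs]
  calc ‖(inner ℂ (wv ρ hρ (E x a) 1) (wv ρ hρ 1 (F y b) - wv ρ hρ 1 (F y' b)) : ℂ)‖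
      ≤ ‖wv ρ hρ (E x a) 1‖ * ‖wv ρ hρ 1 (F y b) - wv ρ hρ 1 (F y' b)‖ :=
        norm_inner_le_norm _ _
    _ ≤ 1 * (2⁻¹ * Real.sqrt (2*(1 - corr P 0 y)) + 2⁻¹ * Real.sqrt (2*(1 - corr P 0 y'))) := by
        have htri : ‖wv ρ hρ 1 (F y b) - wv ρ hρ 1 (F y' b)‖
            ≤ ‖wv ρ hρ 1 (F y b) - wv ρ hρ (E 0 b) 1‖
              + ‖wv ρ hρ (E 0 b) 1 - wv ρ hρ 1 (F y' b)‖ :=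
          norm_sub_le_norm_sub_add_norm_sub _ _ _
        have t1 : ‖wv ρ hρ 1 (F y b) - wv ρ hρ (E 0 b) 1‖
            ≤ 2⁻¹ * Real.sqrt (2*(1 - corr P 0 y)) := by
          refine le_trans (hdiffv y b) ?_
          have := hEps y
          nlinarith [norm_nonneg (wv ρ hρ (E 0 0 - E 0 1) 1 - wv ρ hρ 1 (F y 0 - F y 1))]
        have t2 : ‖wv ρ hρ (E 0 b) 1 - wv ρ hρ 1 (F y' b)‖
            ≤ 2⁻¹ * Real.sqrt (2*(1 - corr P 0 y')) := by
          rw [norm_sub_rev]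
          refine le_trans (hdiffv y' b) ?_
          have := hEps y'
          nlinarith [norm_nonneg (wv ρ hρ (E 0 0 - E 0 1) 1 - wv ρ hρ 1 (F y' 0 - F y' 1))]
        have hn1 : ‖wv ρ hρ 1 (F y b) - wv ρ hρ 1 (F y' b)‖ ≤
            2⁻¹ * Real.sqrt (2*(1 - corr P 0 y)) + 2⁻¹ * Real.sqrt (2*(1 - corr P 0 y')) := by
          linarith
        have := hExa_norm x a
        have hnn : (0:ℝ) ≤ ‖wv ρ hρ 1 (F y b) - wv ρ hρ 1 (F y' b)‖ := norm_nonneg _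
        nlinarith [Real.sqrt_nonneg (2*(1 - corr P 0 y)), Real.sqrt_nonneg (2*(1 - corr P 0 y'))]
    _ = (Real.sqrt (2*(1 - corr P 0 y)) + Real.sqrt (2*(1 - corr P 0 y')))/2 := by ring

-- continuity of coordinates
lemma cont_eval (a b x y : Fin 2) : Continuous fun P : Behaviour => P a b x y :=
  (continuous_apply y).comp ((continuous_apply x).comp
    ((continuous_apply b).comp (continuous_apply a)))

lemma cont_corr (x y : Fin 2) : Continuous fun P : Behaviour => corr P x y := by
  have h : (fun P : Behaviour => corr P x y)
      = fun P : Behaviour => P 0 0 x y - P 0 1 x y - P 1 0 x y + P 1 1 x y :=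
    funext fun P => corr_expand P x y
  rw [h]
  exact (((cont_eval 0 0 x y).sub (cont_eval 0 1 x y)).sub (cont_eval 1 0 x y)).add
    (cont_eval 1 1 x y)

lemma NS_closed : IsClosed NS := by
  have h1 : IsClosed {P : Behaviour | ∀ a b x y, 0 ≤ P a b x y} := by
    rw [Set.setOf_forall]
    refine isClosed_iInter fun a => ?_
    rw [Set.setOf_forall]
    refine isClosed_iInter fun b => ?_
    rw [Set.setOf_forall]
    refine isClosed_iInter fun x => ?_
    rw [Set.setOf_forall]
    refine isClosed_iInter fun y => ?_
    exact isClosed_le continuous_const (cont_eval a b x y)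
  have hsum : ∀ x y : Fin 2, Continuous fun P : Behaviour => ∑ a : Fin 2, ∑ b : Fin 2, P a b x y := by
    intro x y
    refine continuous_finset_sum _ fun a _ => continuous_finset_sum _ fun b _ => cont_eval a b x y
  have hsumb : ∀ a x y : Fin 2, Continuous fun P : Behaviour => ∑ b : Fin 2, P a b x y := by
    intro a x y
    exact continuous_finset_sum _ fun b _ => cont_eval a b x y
  have hsuma : ∀ b x y : Fin 2, Continuous fun P : Behaviour => ∑ a : Fin 2, P a b x y := by
    intro b x y
    exact continuous_finset_sum _ fun a _ => cont_eval a b x y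
  have h2 : IsClosed {P : Behaviour | ∀ x y : Fin 2, ∑ a : Fin 2, ∑ b : Fin 2, P a b x y = 1} := by
    rw [Set.setOf_forall]
    refine isClosed_iInter fun x => ?_
    rw [Set.setOf_forall]
    refine isClosed_iInter fun y => ?_
    exact isClosed_eq (hsum x y) continuous_const
  have h3 : IsClosed {P : Behaviour |
      ∀ a x y y' : Fin 2, ∑ b : Fin 2, P a b x y = ∑ b : Fin 2, P a b x y'} := by
    rw [Set.setOf_forall]
    refine isClosed_iInter fun a => ?_
    rw [Set.setOf_forall]
    refine isClosed_iInter fun x => ?_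
    rw [Set.setOf_forall]
    refine isClosed_iInter fun y => ?_
    rw [Set.setOf_forall]
    refine isClosed_iInter fun y' => ?_
    exact isClosed_eq (hsumb a x y) (hsumb a x y')
  have h4 : IsClosed {P : Behaviour |
      ∀ b x x' y : Fin 2, ∑ a : Fin 2, P a b x y = ∑ a : Fin 2, P a b x' y} := by
    rw [Set.setOf_forall]
    refine isClosed_iInter fun b => ?_
    rw [Set.setOf_forall]
    refine isClosed_iInter fun x => ?_
    rw [Set.setOf_forall]
    refine isClosed_iInter fun x' => ?_
    rw [Set.setOf_forall]
    refine isClosed_iInter fun y => ?_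
    exact isClosed_eq (hsuma b x y) (hsuma b x' y)
  have : NS = {P : Behaviour | ∀ a b x y, 0 ≤ P a b x y}
      ∩ ({P : Behaviour | ∀ x y : Fin 2, ∑ a : Fin 2, ∑ b : Fin 2, P a b x y = 1}
      ∩ ({P : Behaviour | ∀ a x y y' : Fin 2, ∑ b : Fin 2, P a b x y = ∑ b : Fin 2, P a b x y'}
      ∩ {P : Behaviour | ∀ b x x' y : Fin 2, ∑ a : Fin 2, P a b x y = ∑ a : Fin 2, P a b x' y})) := by
    ext P; rfl
  rw [this]
  exact h1.inter (h2.inter (h3.inter h4))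

lemma Q_sub_NS : Q ⊆ NS := by
  rw [Q]
  refine closure_minimal ?_ NS_closed
  rintro P ⟨d, hd, hr⟩
  exact (realisation_facts hr).1

lemma NS_corr {P : Behaviour} (hP : P ∈ NS) (x y : Fin 2) :
    corr P x y = 1 - 2*(P 0 1 x y + P 1 0 x y) := by
  have h := hP.2.1 x y
  rw [Fin.sum_univ_two, Fin.sum_univ_two, Fin.sum_univ_two] at h
  rw [corr_expand]
  linarith

lemma NS_corr_le_one {P : Behaviour} (hP : P ∈ NS) (x y : Fin 2) : corr P x y ≤ 1 := by
  have h := NS_corr hP x y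
  have h01 := hP.1 0 1 x y
  have h10 := hP.1 1 0 x y
  linarith

lemma det_mem_NS (f g : Fin 2 → Fin 2) : detBehaviour f g ∈ NS := by
  refine ⟨?_, ?_, ?_, ?_⟩
  · intro a b x y
    rw [detBehaviour]
    split <;> norm_num
  · intro x y
    rw [Fin.sum_univ_two, Fin.sum_univ_two, Fin.sum_univ_two]
    rcases (by omega : f x = 0 ∨ f x = 1) with h | h <;>
      rcases (by omega : g y = 0 ∨ g y = 1) with h' | h' <;>
        simp [detBehaviour, h, h']
  · intro a x y y'
    rw [Fin.sum_univ_two, Fin.sum_univ_two]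
    rcases (by omega : g y = 0 ∨ g y = 1) with h | h <;>
      rcases (by omega : g y' = 0 ∨ g y' = 1) with h' | h' <;>
        simp [detBehaviour, h, h']
  · intro b x x' y
    rw [Fin.sum_univ_two, Fin.sum_univ_two]
    rcases (by omega : f x = 0 ∨ f x = 1) with h | h <;>
      rcases (by omega : f x' = 0 ∨ f x' = 1) with h' | h' <;>
        simp [detBehaviour, h, h']

lemma local_model {P : Behaviour} (hP : P ∈ NS)
    (hyind : ∀ a b x y, P a b x y = P a b x 0)
    (h01 : P 0 1 0 0 = 0) (h10 : P 1 0 0 0 = 0) : P ∈ L := by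
  obtain ⟨hpos, hnorm, hA, hB⟩ := hP
  have hB0 : P 0 0 0 0 + P 1 0 0 0 = P 0 0 1 0 + P 1 0 1 0 := by
    have := hB 0 0 1 0
    rwa [Fin.sum_univ_two, Fin.sum_univ_two] at this
  have hB1 : P 0 1 0 0 + P 1 1 0 0 = P 0 1 1 0 + P 1 1 1 0 := by
    have := hB 1 0 1 0
    rwa [Fin.sum_univ_two, Fin.sum_univ_two] at this
  have hnorm10 : P 0 0 1 0 + P 0 1 1 0 + (P 1 0 1 0 + P 1 1 1 0) = 1 := by
    have := hnorm 1 0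
    rwa [Fin.sum_univ_two, Fin.sum_univ_two, Fin.sum_univ_two] at this
  have key : P = ∑ p : Fin 2 × Fin 2,
      (P p.2 p.1 1 0) • detBehaviour ![p.1, p.2] (fun _ => p.1) := by
    funext a b x y
    have hsum : (∑ p : Fin 2 × Fin 2,
        (P p.2 p.1 1 0) • detBehaviour ![p.1, p.2] (fun _ => p.1)) a b x y
        = ∑ p : Fin 2 × Fin 2,
          (P p.2 p.1 1 0) * detBehaviour ![p.1, p.2] (fun _ => p.1) a b x y := by
      simp [Finset.sum_apply, Pi.smul_apply, smul_eq_mul]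
    rw [hsum, Fintype.sum_prod_type, Fin.sum_univ_two, Fin.sum_univ_two, Fin.sum_univ_two]
    fin_cases a <;> fin_cases b <;> fin_cases x <;> fin_cases y <;>
      rw [hyind] <;>
      simp [detBehaviour] <;>
      linarith [hB0, hB1, h01, h10]
  rw [key]
  refine Convex.sum_mem (convex_convexHull ℝ _) (fun p _ => hpos p.2 p.1 1 0) ?_
    (fun p _ => subset_convexHull ℝ _ ⟨![p.1, p.2], fun _ => p.1, rfl⟩)
  rw [Fintype.sum_prod_type, Fin.sum_univ_two, Fin.sum_univ_two, Fin.sum_univ_two]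
  linarith [hnorm10]

lemma det_inj : Function.Injective
    (fun fg : (Fin 2 → Fin 2) × (Fin 2 → Fin 2) => detBehaviour fg.1 fg.2) := by
  intro p q h
  simp only at h
  have hf : p.1 = q.1 := by
    funext x
    have h1 := congrFun (congrFun (congrFun (congrFun h (p.1 x)) (p.2 0)) x) 0
    simp [detBehaviour] at h1
    exact h1.1
  have hg : p.2 = q.2 := by
    funext y
    have h1 := congrFun (congrFun (congrFun (congrFun h (p.1 0)) (p.2 y)) 0) y
    simp [detBehaviour] at h1
    exact h1.2
  exact Prod.ext hf hg

lemma detGen_eq : {P : Behaviour | ∃ f g, P = detBehaviour f g}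
    = ↑((Finset.univ : Finset ((Fin 2 → Fin 2) × (Fin 2 → Fin 2))).image
        fun fg => detBehaviour fg.1 fg.2) := by
  ext P
  simp only [Set.mem_setOf_eq, Finset.coe_image, Set.mem_image, Finset.mem_coe,
    Finset.mem_univ, Finset.coe_univ, Set.image_univ, Set.mem_range]
  constructor
  · rintro ⟨f, g, rfl⟩; exact ⟨(f, g), rfl⟩
  · rintro ⟨⟨f, g⟩, rfl⟩; exact ⟨f, g, rfl⟩

lemma L_weights {P : Behaviour} (hP : P ∈ L) :
    ∃ w : (Fin 2 → Fin 2) → (Fin 2 → Fin 2) → ℝ, (∀ f g, 0 ≤ w f g) ∧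
      (∑ f : Fin 2 → Fin 2, ∑ g : Fin 2 → Fin 2, w f g = 1) ∧
      P = ∑ f : Fin 2 → Fin 2, ∑ g : Fin 2 → Fin 2, w f g • detBehaviour f g := by
  rw [L, detGen_eq, Finset.convexHull_eq] at hP
  obtain ⟨w, hw0, hw1, hwc⟩ := hP
  rw [Finset.centerMass_eq_of_sum_1 _ _ hw1] at hwc
  rw [Finset.sum_image (fun p _ q _ h => det_inj h)] at hw1
  rw [Finset.sum_image (fun p _ q _ h => det_inj h)] at hwc
  refine ⟨fun f g => w (detBehaviour f g), fun f g => hw0 _ (Finset.mem_image_of_mem _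
    (Finset.mem_univ (f, g))), ?_, ?_⟩
  · rw [Fintype.sum_prod_type] at hw1
    exact hw1
  · rw [Fintype.sum_prod_type] at hwc
    simpa using hwc.symm

lemma combo_mem_L (w : (Fin 2 → Fin 2) → (Fin 2 → Fin 2) → ℝ)
    (h0 : ∀ f g, 0 ≤ w f g) (h1 : ∑ f : Fin 2 → Fin 2, ∑ g : Fin 2 → Fin 2, w f g = 1) :
    (∑ f : Fin 2 → Fin 2, ∑ g : Fin 2 → Fin 2, w f g • detBehaviour f g) ∈ L := by
  rw [show (∑ f : Fin 2 → Fin 2, ∑ g : Fin 2 → Fin 2, w f g • detBehaviour f g)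
      = ∑ p : (Fin 2 → Fin 2) × (Fin 2 → Fin 2), w p.1 p.2 • detBehaviour p.1 p.2 by
    rw [Fintype.sum_prod_type]]
  exact Convex.sum_mem (convex_convexHull ℝ _) (fun p _ => h0 p.1 p.2)
    (by rw [Fintype.sum_prod_type]; exact h1)
    (fun p _ => subset_convexHull ℝ _ ⟨p.1, p.2, rfl⟩)

noncomputable def e4 : Fin 4 ≃ (Fin 2 → Fin 2) :=
  (finCongr (by norm_num : (4:ℕ) = 2*2)).trans
    (finProdFinEquiv.symm.trans (piFinTwoEquiv fun _ => Fin 2).symm)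

lemma weighted_real (w : (Fin 2 → Fin 2) → (Fin 2 → Fin 2) → ℝ)
    (h0 : ∀ f g, 0 ≤ w f g) (h1 : ∑ f : Fin 2 → Fin 2, ∑ g : Fin 2 → Fin 2, w f g = 1) :
    HasRealisation 4 (∑ f : Fin 2 → Fin 2, ∑ g : Fin 2 → Fin 2, w f g • detBehaviour f g) := by
  refine ⟨Matrix.diagonal (fun p : Fin 4 × Fin 4 => (w (e4 p.1) (e4 p.2) : ℂ)),
    fun x a => Matrix.diagonal (fun i : Fin 4 => if e4 i x = a then (1:ℂ) else 0),
    fun y b => Matrix.diagonal (fun j : Fin 4 => if e4 j y = b then (1:ℂ) else 0),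
    ?_, ?_, ?_, ?_, ?_, ?_, ?_⟩
  · exact Matrix.PosSemidef.diagonal fun p => Complex.zero_le_real.2 (h0 _ _)
  · rw [Matrix.trace_diagonal]
    have : ∑ p : Fin 4 × Fin 4, ((w (e4 p.1) (e4 p.2) : ℝ) : ℂ)
        = ∑ f : Fin 2 → Fin 2, ∑ g : Fin 2 → Fin 2, ((w f g : ℝ) : ℂ) := by
      rw [Fintype.sum_prod_type]
      rw [Equiv.sum_comp e4 (fun f => ∑ j : Fin 4, ((w f (e4 j) : ℝ) : ℂ))]
      exact Finset.sum_congr rfl fun f _ =>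
        Equiv.sum_comp e4 (fun g => ((w f g : ℝ) : ℂ))
    rw [this]
    exact_mod_cast congrArg Complex.ofReal h1
  · intro x a
    exact Matrix.PosSemidef.diagonal fun i => by split <;> simp
  · intro y b
    exact Matrix.PosSemidef.diagonal fun j => by split <;> simp
  · intro x
    have hfun : (fun i => (if e4 i x = 0 then (1:ℂ) else 0) + if e4 i x = 1 then (1:ℂ) else 0)
        = fun _ => (1:ℂ) := by
      funext i
      rcases (by omega : e4 i x = 0 ∨ e4 i x = 1) with h | h <;> simp [h]
    rw [Fin.sum_univ_two, Matrix.diagonal_add, hfun, Matrix.diagonal_one]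
  · intro y
    have hfun : (fun j => (if e4 j y = 0 then (1:ℂ) else 0) + if e4 j y = 1 then (1:ℂ) else 0)
        = fun _ => (1:ℂ) := by
      funext j
      rcases (by omega : e4 j y = 0 ∨ e4 j y = 1) with h | h <;> simp [h]
    rw [Fin.sum_univ_two, Matrix.diagonal_add, hfun, Matrix.diagonal_one]
  · intro a b x y
    rw [Matrix.diagonal_kronecker_diagonal, Matrix.diagonal_mul_diagonal, Matrix.trace_diagonal]
    have hL0 : (∑ f : Fin 2 → Fin 2, ∑ g : Fin 2 → Fin 2, w f g • detBehaviour f g) a b x y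
        = ∑ f : Fin 2 → Fin 2, ∑ g : Fin 2 → Fin 2, w f g * detBehaviour f g a b x y := by
      simp [Finset.sum_apply, Pi.smul_apply, smul_eq_mul]
    rw [hL0]
    push_cast
    have hR : ∑ p : Fin 4 × Fin 4,
        ((if e4 p.1 x = a then (1:ℂ) else 0) * (if e4 p.2 y = b then (1:ℂ) else 0))
          * (w (e4 p.1) (e4 p.2) : ℂ)
        = ∑ f : Fin 2 → Fin 2, ∑ g : Fin 2 → Fin 2,
            ((if f x = a then (1:ℂ) else 0) * (if g y = b then (1:ℂ) else 0)) * (w f g : ℂ) := by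
      rw [Fintype.sum_prod_type]
      rw [Equiv.sum_comp e4 (fun f => ∑ j : Fin 4,
        ((if f x = a then (1:ℂ) else 0) * (if e4 j y = b then (1:ℂ) else 0)) * (w f (e4 j) : ℂ))]
      exact Finset.sum_congr rfl fun f _ => Equiv.sum_comp e4
        (fun g => ((if f x = a then (1:ℂ) else 0) * (if g y = b then (1:ℂ) else 0)) * (w f g : ℂ))
    rw [hR]
    refine Finset.sum_congr rfl fun f _ => Finset.sum_congr rfl fun g _ => ?_
    rw [detBehaviour]
    push_cast
    rcases eq_or_ne a (f x) with h | h <;> rcases eq_or_ne b (g y) with h' | h' <;>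
      simp [h, h', eq_comm] <;> ring

lemma L_sub_Qfinite : L ⊆ Qfinite := by
  intro P hP
  obtain ⟨w, h0, h1, rfl⟩ := L_weights hP
  exact ⟨4, by norm_num, weighted_real w h0 h1⟩

lemma main1 {P : Behaviour} (hQ : P ∈ Q) (h00 : corr P 0 0 = 1) (h01 : corr P 0 1 = 1) :
    (∀ a b x y, P a b x y = P a b x 0) ∧ P ∈ NS := by
  have hNS : P ∈ NS := Q_sub_NS hQ
  obtain ⟨S, hS, hlim⟩ := mem_closure_iff_seq_limit.1 hQ
  refine ⟨?_, hNS⟩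
  intro a b x y
  have hcy : ∀ y' : Fin 2, corr P 0 y' = 1 := by
    intro y'
    rcases (by omega : y' = 0 ∨ y' = 1) with rfl | rfl
    exacts [h00, h01]
  have hb : ∀ n, |S n a b x y - S n a b x 0|
      ≤ (Real.sqrt (2*(1 - corr (S n) 0 y)) + Real.sqrt (2*(1 - corr (S n) 0 0)))/2 := by
    intro n
    obtain ⟨d, hd, hr⟩ := hS n
    exact (realisation_facts hr).2 a b x y 0
  have ht1 : Filter.Tendsto (fun n => |S n a b x y - S n a b x 0|) Filter.atTop
      (nhds |P a b x y - P a b x 0|) :=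
    (((cont_eval a b x y).sub (cont_eval a b x 0)).abs.tendsto P).comp hlim
  have hcv : ∀ y' : Fin 2, Filter.Tendsto
      (fun n => Real.sqrt (2*(1 - corr (S n) 0 y'))) Filter.atTop (nhds 0) := by
    intro y'
    have h1 : Filter.Tendsto (fun n => corr (S n) 0 y') Filter.atTop (nhds (corr P 0 y')) :=
      ((cont_corr 0 y').tendsto P).comp hlim
    have h2 : Filter.Tendsto (fun n => 2*(1 - corr (S n) 0 y')) Filter.atTop
        (nhds (2*(1 - corr P 0 y'))) := (h1.const_sub 1).const_mul 2
    have h3 := h2.sqrt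
    rw [hcy y'] at h3
    simpa using h3
  have ht2 : Filter.Tendsto (fun n =>
      (Real.sqrt (2*(1 - corr (S n) 0 y)) + Real.sqrt (2*(1 - corr (S n) 0 0)))/2)
      Filter.atTop (nhds 0) := by
    have := ((hcv y).add (hcv 0)).div_const 2
    simpa using this
  have hfin : |P a b x y - P a b x 0| ≤ 0 := le_of_tendsto_of_tendsto' ht1 ht2 hb
  have := abs_nonneg (P a b x y - P a b x 0)
  have h0 : |P a b x y - P a b x 0| = 0 := le_antisymm hfin this
  have := abs_eq_zero.mp h0
  linarith [sub_eq_zero.mp this]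

lemma main_pt1 {P : Behaviour} (hQ : P ∈ Q) (h00 : corr P 0 0 = 1) (h01 : corr P 0 1 = 1) :
    corr P 1 0 = corr P 1 1 ∧ P ∈ L := by
  obtain ⟨hyind, hNS⟩ := main1 hQ h00 h01
  constructor
  · rw [corr_expand, corr_expand, hyind 0 0 1 1, hyind 0 1 1 1, hyind 1 0 1 1, hyind 1 1 1 1]
  · have hz := NS_corr hNS 0 0
    have n01 := hNS.1 0 1 0 0
    have n10 := hNS.1 1 0 0 0
    exact local_model hNS hyind (by linarith) (by linarith)

lemma convex_NS : Convex ℝ NS := by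
  rintro P hP Q' hQ' s t hs ht hst
  have happ : ∀ a b x y : Fin 2, (s • P + t • Q') a b x y = s * P a b x y + t * Q' a b x y := by
    intro a b x y
    simp [Pi.add_apply, Pi.smul_apply, smul_eq_mul]
  refine ⟨?_, ?_, ?_, ?_⟩
  · intro a b x y
    rw [happ]
    have := hP.1 a b x y
    have := hQ'.1 a b x y
    positivity
  · intro x y
    have h1 := hP.2.1 x y
    have h2 := hQ'.2.1 x y
    rw [Fin.sum_univ_two, Fin.sum_univ_two, Fin.sum_univ_two] at h1 h2 ⊢
    rw [happ, happ, happ, happ]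
    nlinarith [h1, h2]
  · intro a x y y'
    have h1 := hP.2.2.1 a x y y'
    have h2 := hQ'.2.2.1 a x y y'
    rw [Fin.sum_univ_two, Fin.sum_univ_two] at h1 h2
    rw [Fin.sum_univ_two, Fin.sum_univ_two, happ, happ, happ, happ]
    nlinarith [h1, h2]
  · intro b x x' y
    have h1 := hP.2.2.2 b x x' y
    have h2 := hQ'.2.2.2 b x x' y
    rw [Fin.sum_univ_two, Fin.sum_univ_two] at h1 h2
    rw [Fin.sum_univ_two, Fin.sum_univ_two, happ, happ, happ, happ]
    nlinarith [h1, h2]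

lemma L_sub_NS : L ⊆ NS := by
  rw [L]
  refine convexHull_min ?_ convex_NS
  rintro P ⟨f, g, rfl⟩
  exact det_mem_NS f g

lemma B5_le_two {P : Behaviour} (hP : P ∈ NS) : B5val P ≤ 2 := by
  have h1 := NS_corr_le_one hP 0 0
  have h2 := NS_corr_le_one hP 0 1
  rw [B5val]
  linarith

-- witness
lemma det00_mem_L : detBehaviour (fun _ => 0) (fun _ => 0) ∈ L :=
  subset_convexHull ℝ _ ⟨fun _ => 0, fun _ => 0, rfl⟩

lemma det00_B5 : B5val (detBehaviour (fun _ => 0) (fun _ => 0)) = 2 := by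
  rw [B5val, corr_expand, corr_expand]
  norm_num [detBehaviour]

lemma sSup_L : sSup (B5val '' L) = 2 := by
  refine IsGreatest.csSup_eq ⟨⟨_, det00_mem_L, det00_B5⟩, ?_⟩
  rintro r ⟨P, hP, rfl⟩
  exact B5_le_two (L_sub_NS hP)

lemma L_sub_Q : L ⊆ Q := fun P hP => subset_closure (L_sub_Qfinite hP)

lemma sSup_Q : sSup (B5val '' Q) = 2 := by
  refine IsGreatest.csSup_eq ⟨⟨_, L_sub_Q det00_mem_L, det00_B5⟩, ?_⟩
  rintro r ⟨P, hP, rfl⟩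
  exact B5_le_two (Q_sub_NS hP)

lemma sSup_NS : sSup (B5val '' NS) = 2 := by
  refine IsGreatest.csSup_eq ⟨⟨_, L_sub_NS det00_mem_L, det00_B5⟩, ?_⟩
  rintro r ⟨P, hP, rfl⟩
  exact B5_le_two hP

-- PR facts
lemma PR_apply (a b x y : Fin 2) :
    PR a b x y = (1 + (-1 : ℝ) ^ ((a : ℕ) + (b : ℕ)) * (-1 : ℝ) ^ ((x : ℕ) * (y : ℕ)))/4 := by
  rw [PR, fromCorr]
  ring

lemma PR_mem_NS : PR ∈ NS := by
  refine ⟨?_, ?_, ?_, ?_⟩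
  · intro a b x y
    rw [PR_apply]
    rcases neg_one_pow_eq_or ℝ ((a : ℕ) + (b : ℕ)) with h | h <;>
      rcases neg_one_pow_eq_or ℝ ((x : ℕ) * (y : ℕ)) with h' | h' <;>
        rw [h, h'] <;> norm_num
  · intro x y
    rw [Fin.sum_univ_two, Fin.sum_univ_two, Fin.sum_univ_two,
      PR_apply, PR_apply, PR_apply, PR_apply]
    norm_num
    ring
  · intro a x y y'
    rw [Fin.sum_univ_two, Fin.sum_univ_two, PR_apply, PR_apply, PR_apply, PR_apply]
    rcases (by omega : a = 0 ∨ a = 1) with rfl | rfl <;> norm_num <;> ring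
  · intro b x x' y
    rw [Fin.sum_univ_two, Fin.sum_univ_two, PR_apply, PR_apply, PR_apply, PR_apply]
    rcases (by omega : b = 0 ∨ b = 1) with rfl | rfl <;> norm_num <;> ring

lemma corr_PR (x y : Fin 2) : corr PR x y = (-1:ℝ)^((x:ℕ)*(y:ℕ)) := by
  rw [corr_expand, PR_apply, PR_apply, PR_apply, PR_apply]
  norm_num
  ring

lemma PR_B5 : B5val PR = 2 := by
  rw [B5val, corr_PR, corr_PR]
  norm_num

lemma PR_not_Q : PR ∉ Q := by
  intro h
  have h00 : corr PR 0 0 = 1 := by rw [corr_PR]; norm_num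
  have h01 : corr PR 0 1 = 1 := by rw [corr_PR]; norm_num
  have h10 : corr PR 1 0 = 1 := by rw [corr_PR]; norm_num
  have h11 : corr PR 1 1 = -1 := by rw [corr_PR]; norm_num
  have heq := (main_pt1 h h00 h01).1
  rw [h10, h11] at heq
  norm_num at heq


/-- **A quantum face with `F_L = F_Q ⊊ F_NS`.** Any quantum behaviour with
`⟨A₀B₀⟩ = ⟨A₀B₁⟩ = 1` has `⟨A₁B₀⟩ = ⟨A₁B₁⟩` and is local; the Bell function `B₅`
has `β_L = β_Q = β_NS = 2`, the local and quantum faces coincide, and the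
no-signalling face is strictly larger, as witnessed by the PR box. -/
theorem b5_face :
    (∀ P ∈ Q, corr P 0 0 = 1 → corr P 0 1 = 1 → corr P 1 0 = corr P 1 1 ∧ P ∈ L) ∧
    sSup (B5val '' L) = 2 ∧ sSup (B5val '' Q) = 2 ∧ sSup (B5val '' NS) = 2 ∧
    {P ∈ L | B5val P = sSup (B5val '' L)} = {P ∈ Q | B5val P = sSup (B5val '' Q)} ∧
    {P ∈ Q | B5val P = sSup (B5val '' Q)} ⊂ {P ∈ NS | B5val P = sSup (B5val '' NS)} ∧
    PR ∈ NS ∧ B5val PR = 2 ∧ PR ∉ Q := by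
  have hfaceLQ : {P ∈ L | B5val P = sSup (B5val '' L)} = {P ∈ Q | B5val P = sSup (B5val '' Q)} := by
    rw [sSup_L, sSup_Q]
    ext P
    simp only [Set.mem_setOf_eq, Set.mem_sep_iff]
    constructor
    · rintro ⟨hL, h2⟩
      exact ⟨L_sub_Q hL, h2⟩
    · rintro ⟨hQm, h2⟩
      have hNS := Q_sub_NS hQm
      have c1 := NS_corr_le_one hNS 0 0
      have c2 := NS_corr_le_one hNS 0 1
      rw [B5val] at h2
      have h00 : corr P 0 0 = 1 := by linarith
      have h01 : corr P 0 1 = 1 := by linarith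
      exact ⟨(main_pt1 hQm h00 h01).2, by rw [B5val]; linarith⟩
  have hfaceQN : {P ∈ Q | B5val P = sSup (B5val '' Q)}
      ⊂ {P ∈ NS | B5val P = sSup (B5val '' NS)} := by
    rw [sSup_Q, sSup_NS]
    refine (Set.ssubset_iff_of_subset ?_).mpr ⟨PR, ⟨PR_mem_NS, PR_B5⟩, fun hPRQ => PR_not_Q hPRQ.1⟩
    rintro P ⟨hQm, h2⟩
    exact ⟨Q_sub_NS hQm, h2⟩
  exact ⟨fun P hQm h00 h01 => main_pt1 hQm h00 h01, sSup_L, sSup_Q, sSup_NS,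
    hfaceLQ, hfaceQN, PR_mem_NS, PR_B5, PR_not_Q⟩
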